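/- arXiv:2212.00918 — 4 statements merged into one kernel-verified Lean document; each statement's English description precedes it below -/
import Mathlib

section
/- Let a and b be positive integers with gcd(a, b) > 1, and let r be a positive rational number. If r = φ(m^a)/φ(n^b) and r = φ(m'^a)/φ(n'^b) are both proper representations of r (with m, n, m', n' positive integers), then m = m' and n = n'. -/
/-- A representation `r = φ(m^a)/φ(n^b)` is *proper* if there are no positive
integers `d₁ > 1`, `d₂`, `m₁`, `n₁` with `m = m₁·d₁`, `n = n₁·d₂`, `d₁^a = d₂^b`,
such that every prime `p ∣ d₁·d₂` satisfies `p ∣ gcd(m₁, n₁)` or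
`gcd(p, m₁·n₁) = 1`. -/
def IsProperRep (a b m n : ℕ) : Prop :=
  ¬ ∃ d₁ d₂ m₁ n₁ : ℕ,
      1 < d₁ ∧ 0 < d₂ ∧ 0 < m₁ ∧ 0 < n₁ ∧
      m = m₁ * d₁ ∧ n = n₁ * d₂ ∧ d₁ ^ a = d₂ ^ b ∧
      ∀ p : ℕ, p.Prime → p ∣ d₁ * d₂ →
        p ∣ Nat.gcd m₁ n₁ ∨ Nat.Coprime p (m₁ * n₁)



open Nat Finset in
lemma val_totient_pow (k N p : ℕ) (hk : 0 < k) (hN : 0 < N) (hp : p.Prime) :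
    (Nat.totient (N ^ k)).factorization p + (if p ∣ N then 1 else 0)
      = k * N.factorization p + ∑ q ∈ N.primeFactors, (q - 1).factorization p := by
  have hNk : N ^ k ≠ 0 := pow_ne_zero _ hN.ne'
  have h1 : Nat.totient (N ^ k) =
      ∏ q ∈ N.primeFactors, q ^ (k * N.factorization q - 1) * (q - 1) := by
    rw [Nat.totient_eq_prod_factorization hNk, Finsupp.prod]
    rw [Nat.support_factorization, Nat.primeFactors_pow N hk.ne']
    refine Finset.prod_congr rfl fun q hq => ?_
    rw [Nat.factorization_pow]
    simp
  have hne : ∀ q ∈ N.primeFactors, q ^ (k * N.factorization q - 1) * (q - 1) ≠ 0 := by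
    intro q hq
    have hq2 := (Nat.prime_of_mem_primeFactors hq).two_le
    exact Nat.mul_ne_zero (pow_ne_zero _ (by omega)) (by omega)
  rw [h1, Nat.factorization_prod hne, Finset.sum_apply']
  have hterm : ∀ q ∈ N.primeFactors,
      (Nat.factorization (q ^ (k * N.factorization q - 1) * (q - 1))) p
      = (k * N.factorization q - 1) * (if q = p then 1 else 0)
          + (q - 1).factorization p := by
    intro q hq
    have hqp := Nat.prime_of_mem_primeFactors hq
    rw [Nat.factorization_mul (pow_ne_zero _ hqp.pos.ne') (by have := hqp.two_le; omega : q - 1 ≠ 0),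
      Nat.factorization_pow]
    simp [hqp.factorization, Finsupp.single_apply]
    split_ifs <;> simp
  rw [Finset.sum_congr rfl hterm, Finset.sum_add_distrib]
  have h2 : ∑ q ∈ N.primeFactors, (k * N.factorization q - 1) * (if q = p then 1 else 0)
      = if p ∈ N.primeFactors then k * N.factorization p - 1 else 0 := by
    simp [Finset.sum_ite_eq' N.primeFactors p (fun q => k * N.factorization q - 1), mul_ite]
  rw [h2]
  by_cases hpd : p ∣ N
  · have hmem : p ∈ N.primeFactors := Nat.mem_primeFactors.mpr ⟨hp, hpd, hN.ne'⟩
    have hpos : 1 ≤ N.factorization p := (Nat.Prime.factorization_pos_of_dvd hp hN.ne' hpd)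
    have : 1 ≤ k * N.factorization p := le_mul_of_le_of_one_le hk hpos
    simp [hmem, hpd]
    omega
  · have hmem : p ∉ N.primeFactors := by
      simp [Nat.mem_primeFactors, hpd]
    have : N.factorization p = 0 := Nat.factorization_eq_zero_of_not_dvd hpd
    simp [hmem, hpd, this]

open Nat Finset in
lemma fact_prod_pow (S : Finset ℕ) (hS : ∀ p ∈ S, p.Prime) (c : ℕ → ℕ) (q : ℕ) :
    (∏ p ∈ S, p ^ c p).factorization q = if q ∈ S then c q else 0 := by
  have hne : ∀ p ∈ S, p ^ c p ≠ 0 := fun p hp => pow_ne_zero _ (hS p hp).pos.ne'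
  rw [Nat.factorization_prod hne, Finset.sum_apply']
  have : ∀ p ∈ S, (Nat.factorization (p ^ c p)) q = if p = q then c p else 0 := by
    intro p hp
    rw [Nat.factorization_pow]
    simp [(hS p hp).factorization, Finsupp.single_apply, mul_ite]
  rw [Finset.sum_congr rfl this, Finset.sum_ite_eq' S q c]

open Nat Finset in
lemma star_arith (a b : ℕ) (ha : 2 ≤ a) (hb : 2 ≤ b) (hg : 2 ≤ Nat.gcd a b)
    (α β α' β' iM iN iM' iN' : ℕ)
    (hiM : iM = if 1 ≤ α then 1 else 0) (hiN' : iN' = if 1 ≤ β' then 1 else 0)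
    (hiM' : iM' = if 1 ≤ α' then 1 else 0) (hiN : iN = if 1 ≤ β then 1 else 0)
    (hkey : a * α + b * β' + iM' + iN = a * α' + b * β + iM + iN') :
    a * α + b * β' = a * α' + b * β ∧ iM + iN' = iM' + iN := by
  set g := Nat.gcd a b with hgdef
  have hdvd : (g : ℤ) ∣ ((a : ℤ) * α + b * β') - ((a : ℤ) * α' + b * β) := by
    obtain ⟨a₀, ha₀⟩ := Nat.gcd_dvd_left a b
    obtain ⟨b₀, hb₀⟩ := Nat.gcd_dvd_right a b
    refine ⟨(a₀ : ℤ) * α + b₀ * β' - a₀ * α' - b₀ * β, ?_⟩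
    have h1 : (a : ℤ) = (g : ℤ) * a₀ := by exact_mod_cast ha₀
    have h2 : (b : ℤ) = (g : ℤ) * b₀ := by exact_mod_cast hb₀
    rw [h1, h2]; ring
  obtain ⟨k, hk⟩ := hdvd
  have hiMle : iM ≤ 1 := by rw [hiM]; split <;> omega
  have hiNle : iN ≤ 1 := by rw [hiN]; split <;> omega
  have hiM'le : iM' ≤ 1 := by rw [hiM']; split <;> omega
  have hiN'le : iN' ≤ 1 := by rw [hiN']; split <;> omega
  have hg' : (2 : ℤ) ≤ (g : ℤ) := by exact_mod_cast hg
  rcases lt_trichotomy k 0 with hkneg | hk0 | hkpos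
  · -- u' ≥ u + 2
    have h2 : ((a : ℤ) * α' + b * β) - ((a : ℤ) * α + b * β') = g * (-k) := by
      rw [mul_neg, ← hk]; ring
    have hge : (2 : ℤ) ≤ (g : ℤ) * (-k) := by nlinarith
    have hnat : a * α + b * β' + 2 ≤ a * α' + b * β := by
      have : ((a : ℤ) * α + b * β') + 2 ≤ (a : ℤ) * α' + b * β := by linarith
      exact_mod_cast this
    have hpin : iM' = 1 ∧ iN = 1 ∧ iM = 0 ∧ iN' = 0 := by omega
    obtain ⟨e1, e2, e3, e4⟩ := hpin
    have hα' : 1 ≤ α' := by rw [e1] at hiM'; split_ifs at hiM' <;> omega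
    have hβ : 1 ≤ β := by rw [e2] at hiN; split_ifs at hiN <;> omega
    have hα : α = 0 := by rw [e3] at hiM; split_ifs at hiM <;> omega
    have hβ' : β' = 0 := by rw [e4] at hiN'; split_ifs at hiN' <;> omega
    have p1 : a ≤ a * α' := Nat.le_mul_of_pos_right a (by omega)
    have p2 : b ≤ b * β := Nat.le_mul_of_pos_right b (by omega)
    have p3 : a * α = 0 := by rw [hα, mul_zero]
    have p4 : b * β' = 0 := by rw [hβ', mul_zero]
    omega
  · rw [hk0, mul_zero, sub_eq_zero] at hk
    have : a * α + b * β' = a * α' + b * β := by exact_mod_cast hk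
    exact ⟨this, by omega⟩
  · have hge : (2 : ℤ) ≤ (g : ℤ) * k := by nlinarith
    have hnat : a * α' + b * β + 2 ≤ a * α + b * β' := by
      have : ((a : ℤ) * α' + b * β) + 2 ≤ (a : ℤ) * α + b * β' := by linarith
      exact_mod_cast this
    have hpin : iM = 1 ∧ iN' = 1 ∧ iM' = 0 ∧ iN = 0 := by omega
    obtain ⟨e1, e2, e3, e4⟩ := hpin
    have hα : 1 ≤ α := by rw [e1] at hiM; split_ifs at hiM <;> omega
    have hβ' : 1 ≤ β' := by rw [e2] at hiN'; split_ifs at hiN' <;> omega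
    have hα' : α' = 0 := by rw [e3] at hiM'; split_ifs at hiM' <;> omega
    have hβ : β = 0 := by rw [e4] at hiN; split_ifs at hiN <;> omega
    have p1 : a ≤ a * α := Nat.le_mul_of_pos_right a (by omega)
    have p2 : b ≤ b * β' := Nat.le_mul_of_pos_right b (by omega)
    have p3 : a * α' = 0 := by rw [hα', mul_zero]
    have p4 : b * β = 0 := by rw [hβ, mul_zero]
    omega

open Nat Finset in
lemma key_star (a b m n m' n' : ℕ) (ha : 2 ≤ a) (hb : 2 ≤ b) (hg : 2 ≤ Nat.gcd a b)
    (hm : 0 < m) (hn : 0 < n) (hm' : 0 < m') (hn' : 0 < n')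
    (H : Nat.totient (m ^ a) * Nat.totient (n' ^ b)
        = Nat.totient (m' ^ a) * Nat.totient (n ^ b)) :
    ∀ p : ℕ, p.Prime →
      (a * m.factorization p + b * n'.factorization p
        = a * m'.factorization p + b * n.factorization p)
      ∧ ((if p ∣ m then 1 else 0) + (if p ∣ n' then 1 else 0)
        = ((if p ∣ m' then 1 else 0) + (if p ∣ n then 1 else 0) : ℕ)) := by
  set P := m * n * m' * n' with hP
  have hPpos : 0 < P := by positivity
  have hmP : m ∣ P := ⟨n * m' * n', by ring⟩
  have hnP : n ∣ P := ⟨m * m' * n', by ring⟩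
  have hm'P : m' ∣ P := ⟨m * n * n', by ring⟩
  have hn'P : n' ∣ P := ⟨m * n * m', by ring⟩
  set T := P.primeFactors with hT
  -- prime factor sets as filters of T
  have hfilt : ∀ x : ℕ, 0 < x → x ∣ P → x.primeFactors = T.filter (· ∣ x) := by
    intro x hx hdvd
    ext q
    simp only [Nat.mem_primeFactors, Finset.mem_filter, hT]
    constructor
    · rintro ⟨hq, hqx, -⟩
      exact ⟨⟨hq, hqx.trans hdvd, hPpos.ne'⟩, hqx⟩
    · rintro ⟨⟨hq, -, -⟩, hqx⟩
      exact ⟨hq, hqx, hx.ne'⟩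
  suffices key : ∀ c : ℕ, ∀ p : ℕ, p.Prime → P + 1 ≤ p + c →
      (a * m.factorization p + b * n'.factorization p
        = a * m'.factorization p + b * n.factorization p)
      ∧ ((if p ∣ m then 1 else 0) + (if p ∣ n' then 1 else 0)
        = ((if p ∣ m' then 1 else 0) + (if p ∣ n then 1 else 0) : ℕ)) by
    intro p hp
    exact key (P + 1) p hp (by omega)
  intro c
  induction c with
  | zero =>
    intro p hp hB
    have hnd : ∀ x : ℕ, 0 < x → x ∣ P → ¬ p ∣ x := by
      intro x hx hxP hdvd
      have h1 : p ≤ x := Nat.le_of_dvd hx hdvd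
      have h2 : x ≤ P := Nat.le_of_dvd hPpos hxP
      omega
    have e1 := Nat.factorization_eq_zero_of_not_dvd (hnd m hm hmP)
    have e2 := Nat.factorization_eq_zero_of_not_dvd (hnd n hn hnP)
    have e3 := Nat.factorization_eq_zero_of_not_dvd (hnd m' hm' hm'P)
    have e4 := Nat.factorization_eq_zero_of_not_dvd (hnd n' hn' hn'P)
    rw [e1, e2, e3, e4]
    simp [hnd m hm hmP, hnd n hn hnP, hnd m' hm' hm'P, hnd n' hn' hn'P]
  | succ c ih =>
    intro p hp hB
    by_cases hc : P + 1 ≤ p + c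
    · exact ih p hp hc
    -- valuation of both sides of H at p
    have tm : Nat.totient (m ^ a) ≠ 0 := (Nat.totient_pos.mpr (pow_pos hm a)).ne'
    have tn : Nat.totient (n ^ b) ≠ 0 := (Nat.totient_pos.mpr (pow_pos hn b)).ne'
    have tm' : Nat.totient (m' ^ a) ≠ 0 := (Nat.totient_pos.mpr (pow_pos hm' a)).ne'
    have tn' : Nat.totient (n' ^ b) ≠ 0 := (Nat.totient_pos.mpr (pow_pos hn' b)).ne'
    have hv : (Nat.totient (m ^ a)).factorization p + (Nat.totient (n' ^ b)).factorization p
        = (Nat.totient (m' ^ a)).factorization p + (Nat.totient (n ^ b)).factorization p := by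
      have := congrArg (fun x : ℕ => x.factorization p) H
      simpa [Nat.factorization_mul tm tn', Nat.factorization_mul tm' tn] using this
    have L1m := val_totient_pow a m p (by omega) hm hp
    have L1n' := val_totient_pow b n' p (by omega) hn' hp
    have L1m' := val_totient_pow a m' p (by omega) hm' hp
    have L1n := val_totient_pow b n p (by omega) hn hp
    -- C-equality
    have hCsum : ∀ x : ℕ, 0 < x → x ∣ P →
        ∑ q ∈ x.primeFactors, (q - 1).factorization p
          = ∑ q ∈ T, (if q ∣ x then (q - 1).factorization p else 0) := by
      intro x hx hxP
      rw [hfilt x hx hxP, Finset.sum_filter]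
    have hC : (∑ q ∈ m.primeFactors, (q - 1).factorization p)
          + (∑ q ∈ n'.primeFactors, (q - 1).factorization p)
        = (∑ q ∈ m'.primeFactors, (q - 1).factorization p)
          + (∑ q ∈ n.primeFactors, (q - 1).factorization p) := by
      rw [hCsum m hm hmP, hCsum n hn hnP, hCsum m' hm' hm'P, hCsum n' hn' hn'P,
        ← Finset.sum_add_distrib, ← Finset.sum_add_distrib]
      refine Finset.sum_congr rfl fun q hq => ?_
      by_cases hf : (q - 1).factorization p = 0
      · simp [hf]
      · have hqp : q.Prime := Nat.prime_of_mem_primeFactors hq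
        have hpq1 : p ∣ q - 1 := Nat.dvd_of_factorization_pos hf
        have hple : p ≤ q - 1 := Nat.le_of_dvd (by have := hqp.two_le; omega) hpq1
        have hqltP : q ≤ P := Nat.le_of_dvd hPpos (Nat.dvd_of_mem_primeFactors hq)
        have hq2 := hqp.two_le
        have hp2 := hp.two_le
        have hstar := (ih q hqp (by omega)).2
        have r1 : (if q ∣ m then (q - 1).factorization p else 0)
            = (if q ∣ m then 1 else 0) * (q - 1).factorization p := by split <;> ring
        have r2 : (if q ∣ n' then (q - 1).factorization p else 0)
            = (if q ∣ n' then 1 else 0) * (q - 1).factorization p := by split <;> ring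
        have r3 : (if q ∣ m' then (q - 1).factorization p else 0)
            = (if q ∣ m' then 1 else 0) * (q - 1).factorization p := by split <;> ring
        have r4 : (if q ∣ n then (q - 1).factorization p else 0)
            = (if q ∣ n then 1 else 0) * (q - 1).factorization p := by split <;> ring
        rw [r1, r2, r3, r4, ← add_mul, ← add_mul, hstar]
    -- combine into hkey
    have hkey : a * m.factorization p + b * n'.factorization p
          + (if p ∣ m' then 1 else 0) + (if p ∣ n then 1 else 0)
        = a * m'.factorization p + b * n.factorization p
          + (if p ∣ m then 1 else 0) + (if p ∣ n' then 1 else 0) := by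
      omega
    have idm : ∀ x : ℕ, 0 < x →
        ((if p ∣ x then 1 else 0) : ℕ) = if 1 ≤ x.factorization p then 1 else 0 := by
      intro x hx
      by_cases hd : p ∣ x
      · have h1 : 1 ≤ x.factorization p := hp.factorization_pos_of_dvd hx.ne' hd
        simp [hd, h1]
      · have h0 : x.factorization p = 0 := Nat.factorization_eq_zero_of_not_dvd hd
        simp [hd, h0]
    exact star_arith a b ha hb hg (m.factorization p) (n.factorization p)
      (m'.factorization p) (n'.factorization p) _ _ _ _
      (idm m hm) (idm n' hn') (idm m' hm') (idm n hn) hkey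

open Nat Finset in
lemma star_le (a b m n m' n' : ℕ) (ha : 2 ≤ a) (hb : 2 ≤ b)
    (hm : 0 < m) (hn : 0 < n) (hm' : 0 < m') (hn' : 0 < n')
    (star : ∀ p : ℕ, p.Prime →
      (a * m.factorization p + b * n'.factorization p
        = a * m'.factorization p + b * n.factorization p)
      ∧ ((if p ∣ m then 1 else 0) + (if p ∣ n' then 1 else 0)
        = ((if p ∣ m' then 1 else 0) + (if p ∣ n then 1 else 0) : ℕ)))
    (hproper : IsProperRep a b m n) :
    ∀ p : ℕ, p.Prime → m.factorization p ≤ m'.factorization p := by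
  by_contra hcon
  push_neg at hcon
  obtain ⟨p₀, hp₀, hlt₀⟩ := hcon
  set S := m.primeFactors.filter (fun p => m'.factorization p < m.factorization p) with hS
  have hSprime : ∀ p ∈ S, p.Prime := fun p hp =>
    Nat.prime_of_mem_primeFactors (Finset.mem_filter.mp hp).1
  have hmemS : ∀ p ∈ S, m'.factorization p < m.factorization p := fun p hp =>
    (Finset.mem_filter.mp hp).2
  have hbetaS : ∀ p ∈ S, n'.factorization p < n.factorization p := by
    intro p hp
    have h1 := (star p (hSprime p hp)).1
    have h2 : a * m'.factorization p + a ≤ a * m.factorization p := by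
      have h3 := Nat.mul_le_mul_left a
        (show m'.factorization p + 1 ≤ m.factorization p from hmemS p hp)
      rw [Nat.mul_add, Nat.mul_one] at h3
      exact h3
    have h4 : b * n'.factorization p < b * n.factorization p := by omega
    exact Nat.lt_of_mul_lt_mul_left h4
  set d₁ := ∏ p ∈ S, p ^ (m.factorization p - m'.factorization p) with hd₁
  set d₂ := ∏ p ∈ S, p ^ (n.factorization p - n'.factorization p) with hd₂
  have hd₁0 : d₁ ≠ 0 :=
    Finset.prod_ne_zero_iff.mpr fun p hp => pow_ne_zero _ (hSprime p hp).pos.ne'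
  have hd₂0 : d₂ ≠ 0 :=
    Finset.prod_ne_zero_iff.mpr fun p hp => pow_ne_zero _ (hSprime p hp).pos.ne'
  have factd₁ : ∀ q : ℕ, d₁.factorization q
      = if q ∈ S then m.factorization q - m'.factorization q else 0 :=
    fact_prod_pow S hSprime _
  have factd₂ : ∀ q : ℕ, d₂.factorization q
      = if q ∈ S then n.factorization q - n'.factorization q else 0 :=
    fact_prod_pow S hSprime _
  have hd₁m : d₁ ∣ m := by
    rw [← Nat.factorization_le_iff_dvd hd₁0 hm.ne']
    rw [Finsupp.le_def]
    intro q
    rw [factd₁ q]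
    split <;> omega
  have hd₂n : d₂ ∣ n := by
    rw [← Nat.factorization_le_iff_dvd hd₂0 hn.ne']
    rw [Finsupp.le_def]
    intro q
    rw [factd₂ q]
    split <;> omega
  have hp₀S : p₀ ∈ S := by
    refine Finset.mem_filter.mpr ⟨Nat.mem_primeFactors.mpr ⟨hp₀, ?_, hm.ne'⟩, hlt₀⟩
    exact Nat.dvd_of_factorization_pos (by omega)
  have hd₁1 : 1 < d₁ := by
    have hpd : p₀ ∣ d₁ := Nat.dvd_of_factorization_pos (by rw [factd₁ p₀, if_pos hp₀S]; omega)
    have := Nat.le_of_dvd (Nat.pos_of_ne_zero hd₁0) hpd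
    have := hp₀.two_le
    omega
  set m₁ := m / d₁ with hm₁def
  set n₁ := n / d₂ with hn₁def
  have hm₁ : m = m₁ * d₁ := (Nat.div_mul_cancel hd₁m).symm
  have hn₁ : n = n₁ * d₂ := (Nat.div_mul_cancel hd₂n).symm
  have hm₁0 : 0 < m₁ := Nat.div_pos (Nat.le_of_dvd hm hd₁m) (Nat.pos_of_ne_zero hd₁0)
  have hn₁0 : 0 < n₁ := Nat.div_pos (Nat.le_of_dvd hn hd₂n) (Nat.pos_of_ne_zero hd₂0)
  have factm₁ : ∀ q : ℕ, m₁.factorization q = m.factorization q - d₁.factorization q := by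
    intro q
    rw [hm₁def, Nat.factorization_div hd₁m, Finsupp.tsub_apply]
  have factn₁ : ∀ q : ℕ, n₁.factorization q = n.factorization q - d₂.factorization q := by
    intro q
    rw [hn₁def, Nat.factorization_div hd₂n, Finsupp.tsub_apply]
  have hpow : d₁ ^ a = d₂ ^ b := by
    rw [hd₁, hd₂, ← Finset.prod_pow, ← Finset.prod_pow]
    refine Finset.prod_congr rfl fun p hp => ?_
    rw [← pow_mul, ← pow_mul]
    congr 1
    have h1 := (star p (hSprime p hp)).1
    have h2 : m'.factorization p ≤ m.factorization p := le_of_lt (hmemS p hp)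
    have h3 : n'.factorization p ≤ n.factorization p := le_of_lt (hbetaS p hp)
    have h1z : (a : ℤ) * m.factorization p + b * n'.factorization p
        = a * m'.factorization p + b * n.factorization p := by exact_mod_cast h1
    zify [h2, h3]
    linear_combination h1z
  refine hproper ⟨d₁, d₂, m₁, n₁, hd₁1, Nat.pos_of_ne_zero hd₂0, hm₁0, hn₁0,
    hm₁, hn₁, hpow, ?_⟩
  intro p hp hpd
  have hpS : p ∈ S := by
    rcases hp.dvd_mul.mp hpd with h | h
    · have h1 := hp.factorization_pos_of_dvd hd₁0 h
      by_contra hns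
      rw [factd₁ p, if_neg hns] at h1
      omega
    · have h1 := hp.factorization_pos_of_dvd hd₂0 h
      by_contra hns
      rw [factd₂ p, if_neg hns] at h1
      omega
  have hvm₁ : m₁.factorization p = m'.factorization p := by
    rw [factm₁ p, factd₁ p, if_pos hpS]
    have := hmemS p hpS
    omega
  have hvn₁ : n₁.factorization p = n'.factorization p := by
    rw [factn₁ p, factd₂ p, if_pos hpS]
    have := hbetaS p hpS
    omega
  have hdm : p ∣ m := Nat.dvd_of_factorization_pos (by have := hmemS p hpS; omega)
  have hdn : p ∣ n := Nat.dvd_of_factorization_pos (by have := hbetaS p hpS; omega)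
  have hstar2 := (star p hp).2
  rw [if_pos hdm, if_pos hdn] at hstar2
  by_cases hm'd : p ∣ m'
  · have hn'd : p ∣ n' := by
      by_contra hn'd
      simp [hm'd, hn'd] at hstar2
    left
    refine Nat.dvd_gcd ?_ ?_
    · refine Nat.dvd_of_factorization_pos ?_
      rw [hvm₁]
      have := hp.factorization_pos_of_dvd hm'.ne' hm'd
      omega
    · refine Nat.dvd_of_factorization_pos ?_
      rw [hvn₁]
      have := hp.factorization_pos_of_dvd hn'.ne' hn'd
      omega
  · have hn'd : ¬ p ∣ n' := by
      by_contra hn'd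
      simp [hm'd, hn'd] at hstar2
    right
    have h1 : ¬ p ∣ m₁ := by
      intro h
      have := hp.factorization_pos_of_dvd hm₁0.ne' h
      rw [hvm₁, Nat.factorization_eq_zero_of_not_dvd hm'd] at this
      omega
    have h2 : ¬ p ∣ n₁ := by
      intro h
      have := hp.factorization_pos_of_dvd hn₁0.ne' h
      rw [hvn₁, Nat.factorization_eq_zero_of_not_dvd hn'd] at this
      omega
    exact (hp.coprime_iff_not_dvd.mpr h1).mul_right (hp.coprime_iff_not_dvd.mpr h2)

theorem stmt_10 (a b : ℕ) (ha : 0 < a) (hb : 0 < b) (hab : 1 < Nat.gcd a b)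
    (r : ℚ) (hr : 0 < r) (m n m' n' : ℕ)
    (hm : 0 < m) (hn : 0 < n) (hm' : 0 < m') (hn' : 0 < n')
    (hrep : r = (Nat.totient (m ^ a) : ℚ) / (Nat.totient (n ^ b) : ℚ))
    (hproper : IsProperRep a b m n)
    (hrep' : r = (Nat.totient (m' ^ a) : ℚ) / (Nat.totient (n' ^ b) : ℚ))
    (hproper' : IsProperRep a b m' n') :
    m = m' ∧ n = n' := by
  have hg : 2 ≤ Nat.gcd a b := hab
  have ha2 : 2 ≤ a := le_trans hg (Nat.le_of_dvd ha (Nat.gcd_dvd_left a b))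
  have hb2 : 2 ≤ b := le_trans hg (Nat.le_of_dvd hb (Nat.gcd_dvd_right a b))
  have tn : (0 : ℚ) < (Nat.totient (n ^ b) : ℚ) := by
    exact_mod_cast Nat.totient_pos.mpr (pow_pos hn b)
  have tn' : (0 : ℚ) < (Nat.totient (n' ^ b) : ℚ) := by
    exact_mod_cast Nat.totient_pos.mpr (pow_pos hn' b)
  have H : Nat.totient (m ^ a) * Nat.totient (n' ^ b)
      = Nat.totient (m' ^ a) * Nat.totient (n ^ b) := by
    have he : (Nat.totient (m ^ a) : ℚ) / (Nat.totient (n ^ b) : ℚ)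
        = (Nat.totient (m' ^ a) : ℚ) / (Nat.totient (n' ^ b) : ℚ) := by
      rw [← hrep, ← hrep']
    have he2 : (Nat.totient (m ^ a) : ℚ) * (Nat.totient (n' ^ b) : ℚ)
        = (Nat.totient (m' ^ a) : ℚ) * (Nat.totient (n ^ b) : ℚ) := by
      field_simp at he
      linarith [he]
    exact_mod_cast he2
  have star := key_star a b m n m' n' ha2 hb2 hg hm hn hm' hn' H
  have H' : Nat.totient (m' ^ a) * Nat.totient (n ^ b)
      = Nat.totient (m ^ a) * Nat.totient (n' ^ b) := H.symm
  have star' := key_star a b m' n' m n ha2 hb2 hg hm' hn' hm hn H'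
  have h1 := star_le a b m n m' n' ha2 hb2 hm hn hm' hn' star hproper
  have h2 := star_le a b m' n' m n ha2 hb2 hm' hn' hm hn star' hproper'
  have hfm : ∀ p : ℕ, m.factorization p = m'.factorization p := by
    intro p
    by_cases hp : p.Prime
    · exact le_antisymm (h1 p hp) (h2 p hp)
    · rw [Nat.factorization_eq_zero_of_not_prime m hp,
        Nat.factorization_eq_zero_of_not_prime m' hp]
  have hmm' : m = m' := by
    refine Nat.factorization_inj ?_ ?_ (Finsupp.ext hfm)
    · simpa using hm.ne'
    · simpa using hm'.ne'
  have hfn : ∀ p : ℕ, n.factorization p = n'.factorization p := by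
    intro p
    by_cases hp : p.Prime
    · have hs := (star p hp).1
      rw [hfm p] at hs
      have : b * n'.factorization p = b * n.factorization p := by omega
      exact (Nat.eq_of_mul_eq_mul_left (by omega) this).symm
    · rw [Nat.factorization_eq_zero_of_not_prime n hp,
        Nat.factorization_eq_zero_of_not_prime n' hp]
  have hnn' : n = n' := by
    refine Nat.factorization_inj ?_ ?_ (Finsupp.ext hfn)
    · simpa using hn.ne'
    · simpa using hn'.ne'
  exact ⟨hmm', hnn'⟩
end

section
/- Let a and b be positive integers with gcd(a, b) > 1, let r be a positive rational number, and let r = φ(m^a)/φ(n^b) be a proper representation of r with m, n positive integers. Then P(m·n) = P(r), i.e., the largest prime factor of m·n equals the largest prime occurring in the standard factorization of r (with the convention P(1) = 1). -/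
/-- The largest prime factor of `n`, with the convention that it is `1`
when `n` has no prime factors (in particular `P(1) = 1`). -/
def maxPrimeFac (n : ℕ) : ℕ := WithBot.unbotD 1 n.primeFactors.max

/-- The largest prime occurring in the numerator or denominator of a rational
number written in lowest terms, with the convention `P(1) = 1`. -/
def maxPrimeFacQ (r : ℚ) : ℕ := maxPrimeFac (r.num.natAbs * r.den)

lemma exists_prime_le_of_dvd_totient {p N : ℕ} (hp : p.Prime) (hN : N ≠ 0)
    (h : p ∣ N.totient) : ∃ ℓ, ℓ.Prime ∧ ℓ ∣ N ∧ p ≤ ℓ := by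
  rw [Nat.totient_eq_prod_factorization hN,
    Prime.dvd_finsuppProd_iff hp.prime] at h
  obtain ⟨ℓ, hℓmem, hdvd⟩ := h
  rw [Nat.support_factorization] at hℓmem
  have hℓp : ℓ.Prime := Nat.prime_of_mem_primeFactors hℓmem
  refine ⟨ℓ, hℓp, Nat.dvd_of_mem_primeFactors hℓmem, ?_⟩
  rcases (Nat.Prime.dvd_mul hp).mp hdvd with h1 | h2
  · exact le_of_eq ((Nat.prime_dvd_prime_iff_eq hp hℓp).mp (hp.dvd_of_dvd_pow h1))
  · have h2' := Nat.le_of_dvd (by have := hℓp.two_le; omega) h2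
    omega

lemma not_dvd_totient_of_max {q N : ℕ} (hq : q.Prime) (hN : N ≠ 0) (hqN : ¬ q ∣ N)
    (hmax : ∀ ℓ, ℓ.Prime → ℓ ∣ N → ℓ ≤ q) : ¬ q ∣ N.totient := by
  intro h
  obtain ⟨ℓ, hℓ, hdvd, hle⟩ := exists_prime_le_of_dvd_totient hq hN h
  have : ℓ = q := le_antisymm (hmax ℓ hℓ hdvd) hle
  exact hqN (this ▸ hdvd)

lemma factorization_totient_eq {q N : ℕ} (hq : q.Prime) (hN : N ≠ 0)
    (hα : 1 ≤ N.factorization q)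
    (hmax : ∀ ℓ, ℓ.Prime → ℓ ∣ N → ℓ ≤ q) :
    (N.totient).factorization q = N.factorization q - 1 := by
  set α := N.factorization q with hαdef
  set N' := N / q ^ α with hN'def
  have hsplit : q ^ α * N' = N := Nat.ordProj_mul_ordCompl_eq_self N q
  have hN'0 : N' ≠ 0 := by
    intro h; rw [h, mul_zero] at hsplit; exact hN hsplit.symm
  have hcop : Nat.Coprime (q ^ α) N' :=
    Nat.Coprime.pow_left α (Nat.coprime_ordCompl hq hN)
  have hqN' : ¬ q ∣ N' := Nat.not_dvd_ordCompl hq hN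
  have h1 : N.totient = q ^ (α - 1) * (q - 1) * N'.totient := by
    conv_lhs => rw [← hsplit]
    rw [Nat.totient_mul hcop, Nat.totient_prime_pow hq (by omega : 0 < α)]
  have hq2 := hq.two_le
  have hqq1 : ¬ q ∣ (q - 1) := fun h => absurd (Nat.le_of_dvd (by omega) h) (by omega)
  have htN' : ¬ q ∣ N'.totient := by
    refine not_dvd_totient_of_max hq hN'0 hqN' fun ℓ hℓ hd => ?_
    exact hmax ℓ hℓ (hd.trans (Dvd.intro_left _ hsplit))
  have htNne : N'.totient ≠ 0 := (Nat.totient_pos.mpr (Nat.pos_of_ne_zero hN'0)).ne'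
  rw [h1, Nat.factorization_mul (mul_ne_zero (pow_ne_zero _ (by omega)) (by omega)) htNne,
    Nat.factorization_mul (pow_ne_zero _ (by omega : q ≠ 0)) (by omega : q - 1 ≠ 0)]
  simp [hq.factorization_pow, Nat.factorization_eq_zero_of_not_dvd hqq1,
    Nat.factorization_eq_zero_of_not_dvd htN']

lemma le_maxPrimeFac {p N : ℕ} (hp : p.Prime) (hN : N ≠ 0) (h : p ∣ N) :
    p ≤ maxPrimeFac N := by
  have hmem : p ∈ N.primeFactors := Nat.mem_primeFactors.mpr ⟨hp, h, hN⟩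
  have hle := Finset.le_max hmem
  unfold maxPrimeFac
  cases hx : N.primeFactors.max with
  | bot => rw [hx] at hle; simp at hle
  | coe k => rw [hx] at hle; simpa using hle

lemma maxPrimeFac_le {N K : ℕ} (hK : 1 ≤ K) (h : ∀ p ∈ N.primeFactors, p ≤ K) :
    maxPrimeFac N ≤ K := by
  unfold maxPrimeFac
  cases hx : N.primeFactors.max with
  | bot => simpa using hK
  | coe k =>
    have hmem : k ∈ N.primeFactors := Finset.mem_of_max hx
    simpa using h k hmem

lemma maxPrimeFac_spec {N : ℕ} (hN : 1 < N) :
    (maxPrimeFac N).Prime ∧ maxPrimeFac N ∣ N := by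
  have hne : N.primeFactors.Nonempty := Nat.nonempty_primeFactors.mpr hN
  obtain ⟨k, hk⟩ := Finset.max_of_nonempty hne
  have hmem : k ∈ N.primeFactors := Finset.mem_of_max hk
  have heq : maxPrimeFac N = k := by unfold maxPrimeFac; rw [hk]; rfl
  rw [heq]
  exact ⟨Nat.prime_of_mem_primeFactors hmem, Nat.dvd_of_mem_primeFactors hmem⟩

theorem stmt_11 (a b : ℕ) (ha : 0 < a) (hb : 0 < b) (hab : 1 < Nat.gcd a b)
    (r : ℚ) (hr : 0 < r) (m n : ℕ) (hm : 0 < m) (hn : 0 < n)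
    (hrep : r = (Nat.totient (m ^ a) : ℚ) / (Nat.totient (n ^ b) : ℚ))
    (hproper : IsProperRep a b m n) :
    maxPrimeFac (m * n) = maxPrimeFacQ r := by
  have ha2 : 2 ≤ a := le_trans hab (Nat.le_of_dvd ha (Nat.gcd_dvd_left a b))
  have hb2 : 2 ≤ b := le_trans hab (Nat.le_of_dvd hb (Nat.gcd_dvd_right a b))
  set A := (m ^ a).totient with hAdef
  set B := (n ^ b).totient with hBdef
  have hApos : 0 < A := Nat.totient_pos.mpr (pow_pos hm a)
  have hBpos : 0 < B := Nat.totient_pos.mpr (pow_pos hn b)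
  have hdpos : 0 < r.den := r.pos
  have hnump : 0 < r.num := Rat.num_pos.mpr hr
  -- cross multiplication
  have h0 : (r.num : ℚ) / (r.den : ℚ) = (A : ℚ) / (B : ℚ) := by
    rw [Rat.num_div_den]; exact hrep
  have h1 : (r.num : ℚ) * B = (A : ℚ) * r.den := by
    rw [div_eq_div_iff (by exact_mod_cast hdpos.ne') (by exact_mod_cast hBpos.ne')] at h0
    exact h0
  have hnumabs : (r.num.natAbs : ℤ) = r.num := Int.natAbs_of_nonneg hnump.le
  have hcross : r.num.natAbs * B = A * r.den := by
    rw [← hnumabs] at h1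
    exact_mod_cast h1
  rcases Nat.lt_or_ge 1 (m * n) with hmn | hmn
  swap
  · -- trivial case m = n = 1
    have hmn1 : m * n = 1 := le_antisymm hmn (Nat.one_le_iff_ne_zero.mpr (by positivity))
    obtain ⟨hm1, hn1⟩ := mul_eq_one.mp hmn1
    have hA1 : A = 1 := by rw [hAdef, hm1]; simp
    have hB1 : B = 1 := by rw [hBdef, hn1]; simp
    have hrone : r = 1 := by rw [hrep, hA1, hB1]; norm_num
    rw [hmn1, hrone]
    norm_num [maxPrimeFacQ]
  · obtain ⟨hQp, hQd⟩ := maxPrimeFac_spec hmn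
    set Q := maxPrimeFac (m * n) with hQdef
    have hQ2 := hQp.two_le
    have hmn0 : m * n ≠ 0 := by positivity
    have hmaxm : ∀ ℓ, ℓ.Prime → ℓ ∣ m ^ a → ℓ ≤ Q := fun ℓ hℓ hd =>
      le_maxPrimeFac hℓ hmn0 ((hℓ.dvd_of_dvd_pow hd).mul_right n)
    have hmaxn : ∀ ℓ, ℓ.Prime → ℓ ∣ n ^ b → ℓ ≤ Q := fun ℓ hℓ hd =>
      le_maxPrimeFac hℓ hmn0 ((hℓ.dvd_of_dvd_pow hd).mul_left m)
    have hnumdvd : r.num.natAbs ∣ A :=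
      (r.reduced).dvd_of_dvd_mul_right (by rw [← hcross]; exact dvd_mul_right _ _)
    have hdendvd : r.den ∣ B :=
      (r.reduced).symm.dvd_of_dvd_mul_left (by rw [hcross]; exact dvd_mul_left _ _)
    have hle1 : maxPrimeFacQ r ≤ Q := by
      refine maxPrimeFac_le (by omega) fun p hp => ?_
      have hpp := Nat.prime_of_mem_primeFactors hp
      have hpd := Nat.dvd_of_mem_primeFactors hp
      have hpAB : p ∣ A * B := dvd_trans hpd (mul_dvd_mul hnumdvd hdendvd)
      rcases hpp.dvd_mul.mp hpAB with h | h
      · obtain ⟨ℓ, hℓ, hd, hle⟩ :=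
          exists_prime_le_of_dvd_totient hpp (pow_pos hm a).ne' h
        exact hle.trans (hmaxm ℓ hℓ hd)
      · obtain ⟨ℓ, hℓ, hd, hle⟩ :=
          exists_prime_le_of_dvd_totient hpp (pow_pos hn b).ne' h
        exact hle.trans (hmaxn ℓ hℓ hd)
    have hQdvd : Q ∣ r.num.natAbs * r.den := by
      by_contra hnd
      have hvnum : (r.num.natAbs).factorization Q = 0 :=
        Nat.factorization_eq_zero_of_not_dvd (fun h => hnd (h.mul_right _))
      have hvden : (r.den).factorization Q = 0 :=
        Nat.factorization_eq_zero_of_not_dvd (fun h => hnd (h.mul_left _))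
      have hnabs0 : r.num.natAbs ≠ 0 := by
        simpa using hnump.ne'
      have hfac0 : (r.num.natAbs * B).factorization = (A * r.den).factorization := by
        rw [hcross]
      rw [Nat.factorization_mul hnabs0 hBpos.ne',
        Nat.factorization_mul hApos.ne' hdpos.ne'] at hfac0
      have hfac := DFunLike.congr_fun hfac0 Q
      simp only [Finsupp.add_apply, hvnum, hvden, zero_add, add_zero] at hfac
      -- hfac : B.factorization Q = A.factorization Q
      set α := m.factorization Q with hαdef
      set β := n.factorization Q with hβdef
      have hfpowm : (m ^ a).factorization Q = a * α := by
        rw [Nat.factorization_pow]; simp [hαdef]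
      have hfpown : (n ^ b).factorization Q = b * β := by
        rw [Nat.factorization_pow]; simp [hβdef]
      have hα0 : α = 0 → ¬ Q ∣ m := fun h hd => by
        have := (Nat.Prime.factorization_pos_of_dvd hQp hm.ne' hd)
        omega
      have hβ0 : β = 0 → ¬ Q ∣ n := fun h hd => by
        have := (Nat.Prime.factorization_pos_of_dvd hQp hn.ne' hd)
        omega
      have hvA : 1 ≤ α → A.factorization Q = a * α - 1 := fun h => by
        have := factorization_totient_eq hQp (pow_pos hm a).ne'
          (by rw [hfpowm]; exact le_trans (by omega) (Nat.mul_le_mul ha2 h)) hmaxm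
        rwa [hfpowm] at this
      have hvB : 1 ≤ β → B.factorization Q = b * β - 1 := fun h => by
        have := factorization_totient_eq hQp (pow_pos hn b).ne'
          (by rw [hfpown]; exact le_trans (by omega) (Nat.mul_le_mul hb2 h)) hmaxn
        rwa [hfpown] at this
      have hvA0 : α = 0 → A.factorization Q = 0 := fun h =>
        Nat.factorization_eq_zero_of_not_dvd
          (not_dvd_totient_of_max hQp (pow_pos hm a).ne'
            (fun hd => hα0 h (hQp.dvd_of_dvd_pow hd)) hmaxm)
      have hvB0 : β = 0 → B.factorization Q = 0 := fun h =>
        Nat.factorization_eq_zero_of_not_dvd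
          (not_dvd_totient_of_max hQp (pow_pos hn b).ne'
            (fun hd => hβ0 h (hQp.dvd_of_dvd_pow hd)) hmaxn)
      rcases Nat.eq_zero_or_pos α with hα | hα <;> rcases Nat.eq_zero_or_pos β with hβ | hβ
      · rcases hQp.dvd_mul.mp hQd with h | h
        · exact hα0 hα h
        · exact hβ0 hβ h
      · have e1 := hvA0 hα
        have e2 := hvB hβ
        have : 2 * 1 ≤ b * β := Nat.mul_le_mul hb2 hβ
        omega
      · have e1 := hvA hα
        have e2 := hvB0 hβ
        have : 2 * 1 ≤ a * α := Nat.mul_le_mul ha2 hα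
        omega
      · have e1 := hvA hα
        have e2 := hvB hβ
        have h2a : 2 * 1 ≤ a * α := Nat.mul_le_mul ha2 hα
        have h2b : 2 * 1 ≤ b * β := Nat.mul_le_mul hb2 hβ
        have heqv : a * α = b * β := by omega
        refine hproper ⟨Q ^ α, Q ^ β, m / Q ^ α, n / Q ^ β,
          Nat.one_lt_pow (by omega) hQp.one_lt, pow_pos hQp.pos β, ?_, ?_, ?_, ?_, ?_, ?_⟩
        · exact Nat.ordCompl_pos Q hm.ne'
        · exact Nat.ordCompl_pos Q hn.ne'
        · rw [mul_comm]; exact (Nat.ordProj_mul_ordCompl_eq_self m Q).symm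
        · rw [mul_comm]; exact (Nat.ordProj_mul_ordCompl_eq_self n Q).symm
        · rw [← pow_mul, ← pow_mul, mul_comm α a, heqv, mul_comm b β]
        · intro p hp hpd
          right
          have hpQ : p = Q := by
            rcases hp.dvd_mul.mp hpd with h | h <;>
              exact (Nat.prime_dvd_prime_iff_eq hp hQp).mp (hp.dvd_of_dvd_pow h)
          subst hpQ
          exact Nat.Coprime.mul_right (Nat.coprime_ordCompl hQp hm.ne')
            (Nat.coprime_ordCompl hQp hn.ne')
    have hge : Q ≤ maxPrimeFacQ r := by
      refine le_maxPrimeFac hQp ?_ hQdvd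
      have : r.num.natAbs ≠ 0 := by simpa using hnump.ne'
      positivity
    exact le_antisymm hge hle1
end

section
/- Let a and b be positive integers with gcd(a, b) > 1 and let m, n be positive integers such that 1 = φ(m^a)/φ(n^b) is a proper representation of 1. Then m = 1 and n = 1. -/
lemma aux_dvd_totient {p N : ℕ} (hp : p.Prime) (hN : N ≠ 0) (h : p ∣ N.totient) :
    ∃ q, q.Prime ∧ q ∣ N ∧ (q = p ∨ p ∣ q - 1) := by
  rw [Nat.totient_eq_prod_factorization hN, Finsupp.prod] at h
  obtain ⟨q, hq, hdvd⟩ := (hp.prime.dvd_finset_prod_iff _).mp h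
  rw [Nat.support_factorization] at hq
  refine ⟨q, Nat.prime_of_mem_primeFactors hq, Nat.dvd_of_mem_primeFactors hq, ?_⟩
  rcases (Nat.Prime.dvd_mul hp).mp hdvd with h1 | h2
  · exact Or.inl (((Nat.prime_dvd_prime_iff_eq hp
      (Nat.prime_of_mem_primeFactors hq)).mp (hp.dvd_of_dvd_pow h1)).symm)
  · exact Or.inr h2

lemma aux_not_dvd_totient_ordCompl {p M : ℕ} (hp : p.Prime) (hM : M ≠ 0) (a : ℕ)
    (hmax : ∀ q, q.Prime → q ∣ M → q ≤ p) :
    ¬ p ∣ ((ordCompl[p] M) ^ a).totient := by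
  intro h
  have hM' : (ordCompl[p] M) ^ a ≠ 0 := pow_ne_zero _ (Nat.ordCompl_pos p hM).ne'
  obtain ⟨q, hq, hqd, hqc⟩ := aux_dvd_totient hp hM' h
  have hqM' : q ∣ ordCompl[p] M := hq.dvd_of_dvd_pow hqd
  have hqp : q ≠ p := by
    rintro rfl; exact Nat.not_dvd_ordCompl hp hM hqM'
  rcases hqc with rfl | hd
  · exact hqp rfl
  · have hqM : q ∣ M := hqM'.trans (Nat.ordCompl_dvd M p)
    have h1 : q ≤ p := hmax q hq hqM
    have h2 : p ≤ q - 1 := Nat.le_of_dvd (by have := hq.two_le; omega) hd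
    have := hq.two_le
    omega

lemma aux_factorization_totient_pow {p M : ℕ} (hp : p.Prime) (hM : M ≠ 0) {a : ℕ}
    (ha : 0 < a) (hpM : p ∣ M) (hmax : ∀ q, q.Prime → q ∣ M → q ≤ p) :
    ((M ^ a).totient).factorization p = a * M.factorization p - 1 := by
  set α := M.factorization p with hα
  have hα1 : 1 ≤ α := (Nat.Prime.dvd_iff_one_le_factorization hp hM).mp hpM
  have hsplit : M = p ^ α * ordCompl[p] M := (Nat.ordProj_mul_ordCompl_eq_self M p).symm
  have hcop : Nat.Coprime p (ordCompl[p] M) := Nat.coprime_ordCompl hp hM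
  have hMa : M ^ a = p ^ (a * α) * (ordCompl[p] M) ^ a := by
    conv_lhs => rw [hsplit]
    rw [mul_pow, ← pow_mul, mul_comm α a]
  have hcop2 : Nat.Coprime (p ^ (a * α)) ((ordCompl[p] M) ^ a) :=
    (hcop.pow_right a).pow_left _
  have haα : 0 < a * α := Nat.mul_pos ha hα1
  have htot : (M ^ a).totient = p ^ (a * α - 1) * ((p - 1) * ((ordCompl[p] M) ^ a).totient) := by
    rw [hMa, Nat.totient_mul hcop2, Nat.totient_prime_pow hp haα, mul_assoc]
  have hnd : ¬ p ∣ (p - 1) * ((ordCompl[p] M) ^ a).totient := by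
    rw [hp.dvd_mul]
    push_neg
    constructor
    · intro h; have := Nat.le_of_dvd (by have := hp.two_le; omega) h; have := hp.two_le; omega
    · exact aux_not_dvd_totient_ordCompl hp hM a hmax
  have hne : (p - 1) * ((ordCompl[p] M) ^ a).totient ≠ 0 := by
    rintro h0; exact hnd (h0 ▸ dvd_zero p)
  rw [htot, Nat.factorization_mul (pow_ne_zero _ hp.pos.ne') hne]
  simp [Nat.Prime.factorization_pow hp, Nat.factorization_eq_zero_of_not_dvd hnd]

lemma aux_pow_totient_one {x k : ℕ} (hx : 0 < x) (hk : 2 ≤ k)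
    (h : (x ^ k).totient = 1) : x = 1 := by
  by_contra hne
  have h2x : 2 ≤ x := by omega
  have hge : 2 ^ 2 ≤ x ^ k :=
    le_trans (Nat.pow_le_pow_right (by norm_num) hk) (Nat.pow_le_pow_left h2x k)
  rcases Nat.totient_eq_one_iff.mp h with h1 | h2 <;> omega

theorem stmt_12 (a b : ℕ) (ha : 0 < a) (hb : 0 < b) (hab : 1 < Nat.gcd a b)
    (m n : ℕ) (hm : 0 < m) (hn : 0 < n)
    (hrep : (1 : ℚ) = (Nat.totient (m ^ a) : ℚ) / (Nat.totient (n ^ b) : ℚ))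
    (hproper : IsProperRep a b m n) :
    m = 1 ∧ n = 1 := by
  have ha2 : 2 ≤ a := le_trans hab (Nat.le_of_dvd ha (Nat.gcd_dvd_left a b))
  have hb2 : 2 ≤ b := le_trans hab (Nat.le_of_dvd hb (Nat.gcd_dvd_right a b))
  have heq : (m ^ a).totient = (n ^ b).totient := by
    have h0 : ((n ^ b).totient : ℚ) ≠ 0 := by
      exact_mod_cast (Nat.totient_pos.mpr (pow_pos hn b)).ne'
    have : ((m ^ a).totient : ℚ) = ((n ^ b).totient : ℚ) := by
      field_simp at hrep; exact_mod_cast hrep.symm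
    exact_mod_cast this
  rcases eq_or_lt_of_le (show 1 ≤ m from hm) with hm1 | hm2
  · refine ⟨hm1.symm, aux_pow_totient_one hn hb2 ?_⟩
    rw [← heq, ← hm1]; simp
  rcases eq_or_lt_of_le (show 1 ≤ n from hn) with hn1 | hn2
  · refine ⟨aux_pow_totient_one hm ha2 ?_, hn1.symm⟩
    rw [heq, ← hn1]; simp
  -- now m, n ≥ 2 : contradiction with properness
  exfalso
  have hmn : 2 ≤ m * n := le_trans hm2 (Nat.le_mul_of_pos_right m hn)
  have hne : (m * n).primeFactors.Nonempty := by
    rw [Nat.nonempty_primeFactors]; omega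
  set p := (m * n).primeFactors.max' hne with hpdef
  have hpmem : p ∈ (m * n).primeFactors := Finset.max'_mem _ hne
  have hp : p.Prime := Nat.prime_of_mem_primeFactors hpmem
  have hpmn : p ∣ m * n := Nat.dvd_of_mem_primeFactors hpmem
  have hmax : ∀ q, q.Prime → q ∣ m * n → q ≤ p := by
    intro q hq hqd
    exact Finset.le_max' _ q (Nat.mem_primeFactors.mpr ⟨hq, hqd, by positivity⟩)
  have hmaxm : ∀ q, q.Prime → q ∣ m → q ≤ p :=
    fun q hq hqd => hmax q hq (hqd.mul_right n)
  have hmaxn : ∀ q, q.Prime → q ∣ n → q ≤ p :=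
    fun q hq hqd => hmax q hq (hqd.mul_left m)
  -- p divides both m and n
  have key : ∀ x y e c : ℕ, 2 ≤ x → 2 ≤ y → 2 ≤ e → 2 ≤ c →
      (∀ q, q.Prime → q ∣ x → q ≤ p) → (∀ q, q.Prime → q ∣ y → q ≤ p) →
      p ∣ x → ¬ p ∣ y → (x ^ e).totient = (y ^ c).totient → False := by
    intro x y e c hx hy he hc hmaxx hmaxy hpx hpy heqxy
    have hxne : x ≠ 0 := by omega
    have hfac := aux_factorization_totient_pow hp hxne (by omega : 0 < e) hpx hmaxx
    have hα1 : 1 ≤ x.factorization p := (Nat.Prime.dvd_iff_one_le_factorization hp hxne).mp hpx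
    have hdvd : p ∣ (x ^ e).totient := by
      have hT : (x ^ e).totient ≠ 0 := (Nat.totient_pos.mpr (pow_pos (by omega) e)).ne'
      rw [← pow_one p, Nat.Prime.pow_dvd_iff_le_factorization hp hT, hfac]
      have : 2 * 1 ≤ e * x.factorization p := Nat.mul_le_mul he hα1
      omega
    rw [heqxy] at hdvd
    obtain ⟨q, hq, hqd, hqc⟩ := aux_dvd_totient hp (pow_ne_zero c (by omega)) hdvd
    have hqy : q ∣ y := hq.dvd_of_dvd_pow hqd
    rcases hqc with rfl | hd
    · exact hpy hqy
    · have h1 : q ≤ p := hmaxy q hq hqy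
      have h2 : p ≤ q - 1 := Nat.le_of_dvd (by have := hq.two_le; omega) hd
      have := hq.two_le
      omega
  have hpm : p ∣ m := by
    by_contra hpm
    have hpn : p ∣ n := (hp.dvd_mul.mp hpmn).resolve_left hpm
    exact key n m b a hn2 hm2 hb2 ha2 hmaxn hmaxm hpn hpm heq.symm
  have hpn : p ∣ n := by
    by_contra hpn
    exact key m n a b hm2 hn2 ha2 hb2 hmaxm hmaxn hpm hpn heq
  have hmne : m ≠ 0 := by omega
  have hnne : n ≠ 0 := by omega
  have hα1 : 1 ≤ m.factorization p := (Nat.Prime.dvd_iff_one_le_factorization hp hmne).mp hpm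
  have hβ1 : 1 ≤ n.factorization p := (Nat.Prime.dvd_iff_one_le_factorization hp hnne).mp hpn
  have hfm := aux_factorization_totient_pow hp hmne (by omega : 0 < a) hpm hmaxm
  have hfn := aux_factorization_totient_pow hp hnne (by omega : 0 < b) hpn hmaxn
  rw [heq, hfn] at hfm
  have habαβ : a * m.factorization p = b * n.factorization p := by
    have h1 : 2 * 1 ≤ a * m.factorization p := Nat.mul_le_mul ha2 hα1
    have h2 : 2 * 1 ≤ b * n.factorization p := Nat.mul_le_mul hb2 hβ1
    omega
  apply hproper
  refine ⟨p ^ m.factorization p, p ^ n.factorization p, ordCompl[p] m, ordCompl[p] n,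
    ?_, pow_pos hp.pos _, Nat.ordCompl_pos p hmne, Nat.ordCompl_pos p hnne,
    ?_, ?_, ?_, ?_⟩
  · exact Nat.one_lt_pow (by omega) hp.one_lt
  · rw [mul_comm]; exact (Nat.ordProj_mul_ordCompl_eq_self m p).symm
  · rw [mul_comm]; exact (Nat.ordProj_mul_ordCompl_eq_self n p).symm
  · rw [← pow_mul, ← pow_mul, mul_comm _ a, mul_comm _ b, habαβ]
  · intro q hq hqd
    rw [← pow_add] at hqd
    have hqp : q = p := (Nat.prime_dvd_prime_iff_eq hq hp).mp (hq.dvd_of_dvd_pow hqd)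
    subst hqp
    exact Or.inr ((Nat.coprime_ordCompl hp hmne).mul_right (Nat.coprime_ordCompl hp hnne))
end

section
/- Let a and b be positive integers with gcd(a, b) > 1, let c be a nonzero integer, and suppose that 2^c = φ(m^a)/φ(n^b) and 2^c = φ(m'^a)/φ(n'^b) are proper representations with m, n, m', n' positive integers. Then m = m' and n = n'; moreover m, n, m', n' are all powers of 2. -/
open Nat

/-- If `p` is prime, `p ∤ m`, and all prime factors of `m` are `≤ p`, then `p ∤ φ m`. -/
lemma not_dvd_totient (p : ℕ) (hp : p.Prime) :
    ∀ m : ℕ, m ≠ 0 → ¬ p ∣ m → (∀ q : ℕ, q.Prime → q ∣ m → q ≤ p) → ¬ p ∣ Nat.totient m := by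
  intro m
  induction m using Nat.strong_induction_on with
  | _ m IH =>
    intro hm0 hpm hmax
    rcases eq_or_ne m 1 with rfl | hm1
    · simpa using hp.one_lt.ne'
    obtain ⟨q, hq, hqd⟩ : ∃ q : ℕ, q.Prime ∧ q ∣ m :=
      ⟨m.minFac, Nat.minFac_prime hm1, Nat.minFac_dvd m⟩
    obtain ⟨m₂, hm₂⟩ : ∃ m₂, m = q * m₂ := hqd
    have hqd : q ∣ m := ⟨m₂, hm₂⟩
    have hm₂0 : m₂ ≠ 0 := by rintro rfl; simp at hm₂; omega
    have hm₂lt : m₂ < m := by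
      have := hq.two_le
      calc m₂ < q * m₂ := by
            have : 0 < m₂ := Nat.pos_of_ne_zero hm₂0
            nlinarith
        _ = m := hm₂.symm
    have hpq : p ≠ q := by rintro rfl; exact hpm hqd
    have hpm₂ : ¬ p ∣ m₂ := fun h => hpm (hm₂ ▸ h.mul_left q)
    have hmax₂ : ∀ r : ℕ, r.Prime → r ∣ m₂ → r ≤ p := fun r hr hrd =>
      hmax r hr (hm₂ ▸ hrd.mul_left q)
    have hIH := IH m₂ hm₂lt hm₂0 hpm₂ hmax₂
    by_cases hqm₂ : q ∣ m₂
    · rw [hm₂, Nat.totient_mul_of_prime_of_dvd hq hqm₂]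
      intro h
      rcases (Nat.Prime.dvd_mul hp).mp h with h | h
      · exact hpq ((Nat.prime_dvd_prime_iff_eq hp hq).mp h)
      · exact hIH h
    · have hcop : Nat.Coprime q m₂ := (Nat.Prime.coprime_iff_not_dvd hq).mpr hqm₂
      rw [hm₂, Nat.totient_mul hcop, Nat.totient_prime hq]
      intro h
      rcases (Nat.Prime.dvd_mul hp).mp h with h | h
      · have hqlep : q ≤ p := hmax q hq hqd
        have h1 : 1 ≤ q - 1 := by have := hq.two_le; omega
        have := Nat.le_of_dvd (by omega) h
        omega
      · exact hIH h

lemma totient_factorization (p : ℕ) (hp : p.Prime) :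
    ∀ m : ℕ, m ≠ 0 → p ∣ m → (∀ q : ℕ, q.Prime → q ∣ m → q ≤ p) →
      (Nat.totient m).factorization p + 1 = m.factorization p := by
  intro m
  induction m using Nat.strong_induction_on with
  | _ m IH =>
    intro hm0 hpm hmax
    obtain ⟨m₂, hm₂⟩ : ∃ m₂, m = p * m₂ := hpm
    have hm₂0 : m₂ ≠ 0 := by rintro rfl; simp at hm₂; omega
    have hm₂lt : m₂ < m := by
      have := hp.two_le
      have : 0 < m₂ := Nat.pos_of_ne_zero hm₂0
      nlinarith [hm₂.symm]
    have hmax₂ : ∀ r : ℕ, r.Prime → r ∣ m₂ → r ≤ p := fun r hr hrd =>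
      hmax r hr (hm₂ ▸ hrd.mul_left p)
    have hvm : m.factorization p = 1 + m₂.factorization p := by
      rw [hm₂, Nat.factorization_mul hp.pos.ne' hm₂0]
      simp [hp.factorization]
    by_cases hpm₂ : p ∣ m₂
    · have hφ : Nat.totient m = p * Nat.totient m₂ := by
        rw [hm₂, Nat.totient_mul_of_prime_of_dvd hp hpm₂]
      have hφ₂0 : Nat.totient m₂ ≠ 0 := (Nat.totient_pos.mpr (Nat.pos_of_ne_zero hm₂0)).ne'
      have hv : (Nat.totient m).factorization p = 1 + (Nat.totient m₂).factorization p := by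
        rw [hφ, Nat.factorization_mul hp.pos.ne' hφ₂0]
        simp [hp.factorization]
      have := IH m₂ hm₂lt hm₂0 hpm₂ hmax₂
      omega
    · have hcop : Nat.Coprime p m₂ := (Nat.Prime.coprime_iff_not_dvd hp).mpr hpm₂
      have hφ : Nat.totient m = (p - 1) * Nat.totient m₂ := by
        rw [hm₂, Nat.totient_mul hcop, Nat.totient_prime hp]
      have hnd : ¬ p ∣ Nat.totient m := by
        rw [hφ]
        intro h
        rcases (Nat.Prime.dvd_mul hp).mp h with h | h
        · have h2 := hp.two_le
          have := Nat.le_of_dvd (by omega) h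
          omega
        · exact not_dvd_totient p hp m₂ hm₂0 hpm₂ hmax₂ h
      rw [Nat.factorization_eq_zero_of_not_dvd hnd,
        Nat.factorization_eq_zero_of_not_dvd hpm₂] at *
      omega

lemma pow_two_of_only_two (m : ℕ) (hm : m ≠ 0)
    (h : ∀ q : ℕ, q.Prime → q ∣ m → q = 2) : ∃ i : ℕ, m = 2 ^ i := by
  refine ⟨m.factorization 2, ?_⟩
  have h1 : m / 2 ^ m.factorization 2 = 1 := by
    rw [Nat.eq_one_iff_not_exists_prime_dvd]
    intro r hr hrd
    have hrm : r ∣ m := hrd.trans (Nat.ordCompl_dvd m 2)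
    have : r = 2 := h r hr hrm
    subst this
    exact Nat.not_dvd_ordCompl Nat.prime_two hm hrd
  have := Nat.ordProj_mul_ordCompl_eq_self m 2
  rw [h1, mul_one] at this
  omega

lemma powers_of_two (a b m n : ℕ) (ha : 2 ≤ a) (hb : 2 ≤ b) (hm : 0 < m) (hn : 0 < n)
    (e f : ℕ) (heq : Nat.totient (m ^ a) * 2 ^ f = Nat.totient (n ^ b) * 2 ^ e)
    (hproper : IsProperRep a b m n) : (∃ i, m = 2 ^ i) ∧ (∃ j, n = 2 ^ j) := by
  by_cases hall : ∀ q : ℕ, q.Prime → q ∣ m * n → q = 2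
  · exact ⟨pow_two_of_only_two m hm.ne' (fun q hq hd => hall q hq (hd.mul_right n)),
      pow_two_of_only_two n hn.ne' (fun q hq hd => hall q hq (hd.mul_left m))⟩
  exfalso
  push_neg at hall
  obtain ⟨q₀, hq₀, hq₀d, hq₀2⟩ := hall
  have hmn0 : m * n ≠ 0 := by positivity
  have hne : (m * n).primeFactors.Nonempty :=
    ⟨q₀, Nat.mem_primeFactors.mpr ⟨hq₀, hq₀d, hmn0⟩⟩
  set P := (m * n).primeFactors.max' hne with hPdef
  have hPmem := (m * n).primeFactors.max'_mem hne
  rw [Nat.mem_primeFactors] at hPmem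
  obtain ⟨hP, hPd, -⟩ := hPmem
  have hmaxP : ∀ q : ℕ, q.Prime → q ∣ m * n → q ≤ P := fun q hq hd =>
    Finset.le_max' _ q (Nat.mem_primeFactors.mpr ⟨hq, hd, hmn0⟩)
  have hP2 : P ≠ 2 := by
    intro h
    have := hmaxP q₀ hq₀ hq₀d
    have := hq₀.two_le
    omega
  -- valuations of both sides
  have hA0 : Nat.totient (m ^ a) ≠ 0 := (Nat.totient_pos.mpr (by positivity)).ne'
  have hB0 : Nat.totient (n ^ b) ≠ 0 := (Nat.totient_pos.mpr (by positivity)).ne'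
  have h2f : (2 ^ f : ℕ).factorization P = 0 :=
    Nat.factorization_eq_zero_of_not_dvd (fun h =>
      hP2 ((Nat.prime_dvd_prime_iff_eq hP Nat.prime_two).mp (hP.dvd_of_dvd_pow h)))
  have h2e : (2 ^ e : ℕ).factorization P = 0 :=
    Nat.factorization_eq_zero_of_not_dvd (fun h =>
      hP2 ((Nat.prime_dvd_prime_iff_eq hP Nat.prime_two).mp (hP.dvd_of_dvd_pow h)))
  have hv : (Nat.totient (m ^ a)).factorization P = (Nat.totient (n ^ b)).factorization P := by
    have h1 := congrArg (fun x => x.factorization P) heq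
    simp only [Nat.factorization_mul hA0 (by positivity : (2:ℕ)^f ≠ 0),
      Nat.factorization_mul hB0 (by positivity : (2:ℕ)^e ≠ 0), Finsupp.add_apply] at h1
    omega
  have hmaxm : ∀ q : ℕ, q.Prime → q ∣ m ^ a → q ≤ P := fun q hq hd =>
    hmaxP q hq ((hq.dvd_of_dvd_pow hd).mul_right n)
  have hmaxn : ∀ q : ℕ, q.Prime → q ∣ n ^ b → q ≤ P := fun q hq hd =>
    hmaxP q hq ((hq.dvd_of_dvd_pow hd).mul_left m)
  by_cases hPm : P ∣ m <;> by_cases hPn : P ∣ n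
  · -- P divides both: contradict properness
    set α := m.factorization P with hα
    set β := n.factorization P with hβ
    have hα1 : 1 ≤ α := hP.factorization_pos_of_dvd hm.ne' hPm
    have hβ1 : 1 ≤ β := hP.factorization_pos_of_dvd hn.ne' hPn
    have hvm : (m ^ a).factorization P = a * α := by
      rw [Nat.factorization_pow]; simp; exact Or.inl rfl
    have hvn : (n ^ b).factorization P = b * β := by
      rw [Nat.factorization_pow]; simp; exact Or.inl rfl
    have hAf := totient_factorization P hP (m ^ a) (by positivity)
      (hPm.trans (dvd_pow_self m (by omega))) hmaxm
    have hBf := totient_factorization P hP (n ^ b) (by positivity)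
      (hPn.trans (dvd_pow_self n (by omega))) hmaxn
    have hab : a * α = b * β := by omega
    refine hproper ⟨P ^ α, P ^ β, m / P ^ α, n / P ^ β, ?_, ?_, ?_, ?_, ?_, ?_, ?_, ?_⟩
    · exact Nat.one_lt_pow (by omega) hP.one_lt
    · exact pow_pos hP.pos β
    · exact Nat.ordCompl_pos P hm.ne'
    · exact Nat.ordCompl_pos P hn.ne'
    · rw [mul_comm]; exact (Nat.ordProj_mul_ordCompl_eq_self m P).symm
    · rw [mul_comm]; exact (Nat.ordProj_mul_ordCompl_eq_self n P).symm
    · rw [← pow_mul, ← pow_mul, mul_comm α a, mul_comm β b, hab]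
    · intro p hp hpd
      have hpP : p = P := by
        rw [← pow_add] at hpd
        exact (Nat.prime_dvd_prime_iff_eq hp hP).mp (hp.dvd_of_dvd_pow hpd)
      subst hpP
      right
      rw [Nat.Prime.coprime_iff_not_dvd hP]
      intro h
      rcases (Nat.Prime.dvd_mul hP).mp h with h | h
      · exact Nat.not_dvd_ordCompl hP hm.ne' h
      · exact Nat.not_dvd_ordCompl hP hn.ne' h
  · -- P ∣ m, P ∤ n
    have hAf := totient_factorization P hP (m ^ a) (by positivity)
      (hPm.trans (dvd_pow_self m (by omega))) hmaxm
    have hPnb : ¬ P ∣ n ^ b := fun h => hPn (hP.dvd_of_dvd_pow h)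
    have hBf : (Nat.totient (n ^ b)).factorization P = 0 :=
      Nat.factorization_eq_zero_of_not_dvd
        (not_dvd_totient P hP (n ^ b) (by positivity) hPnb hmaxn)
    have hvm : (m ^ a).factorization P = a * m.factorization P := by
      rw [Nat.factorization_pow]; simp
    have hα1 : 1 ≤ m.factorization P := hP.factorization_pos_of_dvd hm.ne' hPm
    nlinarith [hv, hAf, hBf, hvm]
  · -- P ∣ n, P ∤ m
    have hBf := totient_factorization P hP (n ^ b) (by positivity)
      (hPn.trans (dvd_pow_self n (by omega))) hmaxn
    have hPma : ¬ P ∣ m ^ a := fun h => hPm (hP.dvd_of_dvd_pow h)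
    have hAf : (Nat.totient (m ^ a)).factorization P = 0 :=
      Nat.factorization_eq_zero_of_not_dvd
        (not_dvd_totient P hP (m ^ a) (by positivity) hPma hmaxm)
    have hvn : (n ^ b).factorization P = b * n.factorization P := by
      rw [Nat.factorization_pow]; simp
    have hβ1 : 1 ≤ n.factorization P := hP.factorization_pos_of_dvd hn.ne' hPn
    nlinarith [hv, hAf, hBf, hvn]
  · rcases (Nat.Prime.dvd_mul hP).mp hPd with h | h
    · exact hPm h
    · exact hPn h

def Xe (a i : ℕ) : ℤ := if i = 0 then 0 else (i : ℤ) * a - 1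

lemma two_le_mul' {x y : ℤ} (hx : 1 ≤ x) (hy : 2 ≤ y) : 2 ≤ x * y := by nlinarith

lemma rep_nat_eq (c : ℤ) (A B : ℕ) (hB : 0 < B) (h : (2 : ℚ) ^ c = (A : ℚ) / (B : ℚ)) :
    A * 2 ^ (-c).toNat = B * 2 ^ c.toNat := by
  have hBq : (B : ℚ) ≠ 0 := by positivity
  rw [eq_div_iff hBq] at h
  have key : ((A * 2 ^ (-c).toNat : ℕ) : ℚ) = ((B * 2 ^ c.toNat : ℕ) : ℚ) := by
    push_cast
    rw [← h, mul_comm ((2 : ℚ) ^ c) (B : ℚ), mul_assoc]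
    congr 1
    rw [← zpow_natCast (2 : ℚ) (-c).toNat, ← zpow_natCast (2 : ℚ) c.toNat,
      ← zpow_add₀ (two_ne_zero : (2 : ℚ) ≠ 0)]
    congr 1
    omega
  exact_mod_cast key

lemma Xe_inj (b : ℕ) (hb2 : 2 ≤ b) {j j' : ℕ} (h : Xe b j = Xe b j') : j = j' := by
  have hbz2 : (2 : ℤ) ≤ (b : ℤ) := by exact_mod_cast hb2
  simp only [Xe] at h
  rcases Nat.eq_zero_or_pos j with hj0 | hj1 <;> rcases Nat.eq_zero_or_pos j' with hj'0 | hj'1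
  · omega
  · exfalso
    rw [if_pos hj0, if_neg (by omega : ¬ j' = 0)] at h
    have := two_le_mul' (by exact_mod_cast hj'1 : (1:ℤ) ≤ (j':ℤ)) hbz2
    linarith
  · exfalso
    rw [if_neg (by omega : ¬ j = 0), if_pos hj'0] at h
    have := two_le_mul' (by exact_mod_cast hj1 : (1:ℤ) ≤ (j:ℤ)) hbz2
    linarith
  · rw [if_neg (by omega : ¬ j = 0), if_neg (by omega : ¬ j' = 0)] at h
    have h2 : (j : ℤ) * b = (j' : ℤ) * b := by linarith
    have := mul_right_cancel₀ (by linarith : (b : ℤ) ≠ 0) h2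
    exact_mod_cast this

lemma exp_lt_absurd (a b : ℕ) (hg : 2 ≤ Nat.gcd a b) (ha : 0 < a) (hb : 0 < b)
    (c : ℤ) (hc : c ≠ 0) (i j i' j' : ℕ)
    (h1 : c = Xe a i - Xe b j) (h2 : c = Xe a i' - Xe b j')
    (p1 : ¬(b / Nat.gcd a b < i ∧ a / Nat.gcd a b < j))
    (hlt : i' < i) : False := by
  set g := Nat.gcd a b with hgdef
  have hga : g ∣ a := Nat.gcd_dvd_left a b
  have hgb : g ∣ b := Nat.gcd_dvd_right a b
  set a1 := a / g with ha1def
  set b1 := b / g with hb1def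
  have haa : a = g * a1 := (Nat.mul_div_cancel' hga).symm
  have hbb : b = g * b1 := (Nat.mul_div_cancel' hgb).symm
  have ha2 : 2 ≤ a := le_trans hg (Nat.le_of_dvd ha hga)
  have hb2 : 2 ≤ b := le_trans hg (Nat.le_of_dvd hb hgb)
  have ha1p : 1 ≤ a1 := by
    rcases Nat.eq_zero_or_pos a1 with h | h
    · rw [h, mul_zero] at haa; omega
    · exact h
  have hb1p : 1 ≤ b1 := by
    rcases Nat.eq_zero_or_pos b1 with h | h
    · rw [h, mul_zero] at hbb; omega
    · exact h
  have haz : (a : ℤ) = (g : ℤ) * a1 := by exact_mod_cast congrArg (Nat.cast (R := ℤ)) haa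
  have hbz : (b : ℤ) = (g : ℤ) * b1 := by exact_mod_cast congrArg (Nat.cast (R := ℤ)) hbb
  have hgz : (2 : ℤ) ≤ (g : ℤ) := by exact_mod_cast hg
  have haz2 : (2 : ℤ) ≤ (a : ℤ) := by exact_mod_cast ha2
  have hbz2 : (2 : ℤ) ≤ (b : ℤ) := by exact_mod_cast hb2
  have hi : 1 ≤ i := by omega
  have hiz : (1 : ℤ) ≤ (i : ℤ) := by exact_mod_cast hi
  have hXi : Xe a i = (i : ℤ) * a - 1 := if_neg (by omega)
  have gcontra : ¬ (g : ℤ) ∣ 1 := by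
    intro hdvd
    have := Int.le_of_dvd one_pos hdvd
    linarith
  rcases Nat.eq_zero_or_pos i' with hi'0 | hi'1
  · have hXi' : Xe a i' = 0 := by simp [Xe, hi'0]
    rcases Nat.eq_zero_or_pos j' with hj'0 | hj'1
    · exact hc (by rw [h2, hXi']; simp [Xe, hj'0])
    · have hXj' : Xe b j' = (j' : ℤ) * b - 1 := if_neg (by omega)
      have hj'z : (1 : ℤ) ≤ (j' : ℤ) := by exact_mod_cast hj'1
      rcases Nat.eq_zero_or_pos j with hj0 | hj1
      · have hXj : Xe b j = 0 := by simp [Xe, hj0]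
        rw [hXi, hXj] at h1; rw [hXi', hXj'] at h2
        have h3 : (1 : ℤ) ≤ (i : ℤ) * a - 1 := by
          have := two_le_mul' hiz haz2; linarith
        have h4 : (1 : ℤ) ≤ (j' : ℤ) * b - 1 := by
          have := two_le_mul' hj'z hbz2; linarith
        linarith [h1, h2]
      · have hXj : Xe b j = (j : ℤ) * b - 1 := if_neg (by omega)
        rw [hXi, hXj] at h1; rw [hXi', hXj'] at h2
        have E : (i : ℤ) * a - ((j : ℤ) - j') * b = 1 := by ring_nf; ring_nf at h1 h2; linarith
        exact gcontra ⟨(i : ℤ) * a1 - ((j : ℤ) - j') * b1, by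
          linear_combination (-1 : ℤ) * E + (i : ℤ) * haz - ((j : ℤ) - j') * hbz⟩
  · have hXi' : Xe a i' = (i' : ℤ) * a - 1 := if_neg (by omega)
    have hi'z : (1 : ℤ) ≤ (i' : ℤ) := by exact_mod_cast hi'1
    have hiiz : (i' : ℤ) + 1 ≤ (i : ℤ) := by exact_mod_cast hlt
    rcases Nat.eq_zero_or_pos j' with hj'0 | hj'1
    · have hXj' : Xe b j' = 0 := by simp [Xe, hj'0]
      rcases Nat.eq_zero_or_pos j with hj0 | hj1
      · have hXj : Xe b j = 0 := by simp [Xe, hj0]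
        rw [hXi, hXj] at h1; rw [hXi', hXj'] at h2
        have : (i : ℤ) * a = (i' : ℤ) * a := by linarith
        have := mul_right_cancel₀ (by linarith : (a : ℤ) ≠ 0) this
        omega
      · have hXj : Xe b j = (j : ℤ) * b - 1 := if_neg (by omega)
        rw [hXi, hXj] at h1; rw [hXi', hXj'] at h2
        have E : (j : ℤ) * b - ((i : ℤ) - i') * a = 1 := by linarith
        exact gcontra ⟨(j : ℤ) * b1 - ((i : ℤ) - i') * a1, by
          linear_combination (-1 : ℤ) * E + (j : ℤ) * hbz - ((i : ℤ) - i') * haz⟩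
    · have hXj' : Xe b j' = (j' : ℤ) * b - 1 := if_neg (by omega)
      have hj'z : (1 : ℤ) ≤ (j' : ℤ) := by exact_mod_cast hj'1
      rcases Nat.eq_zero_or_pos j with hj0 | hj1
      · have hXj : Xe b j = 0 := by simp [Xe, hj0]
        rw [hXi, hXj] at h1; rw [hXi', hXj'] at h2
        have h5 : (2 : ℤ) ≤ ((i : ℤ) - i') * a :=
          two_le_mul' (by linarith) haz2
        have h6 : (2 : ℤ) ≤ (j' : ℤ) * b := two_le_mul' hj'z hbz2
        linarith [h1, h2]
      · have hXj : Xe b j = (j : ℤ) * b - 1 := if_neg (by omega)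
        rw [hXi, hXj] at h1; rw [hXi', hXj'] at h2
        have E : ((i : ℤ) - i') * a = ((j : ℤ) - j') * b := by linarith
        have hjj : j' < j := by
          by_contra hcon
          have hjz : (j : ℤ) - j' ≤ 0 := by
            have : j ≤ j' := by omega
            have : (j : ℤ) ≤ j' := by exact_mod_cast this
            linarith
          have h5 : (2 : ℤ) ≤ ((i : ℤ) - i') * a := two_le_mul' (by linarith) haz2
          have h6 : ((j : ℤ) - j') * b ≤ 0 := mul_nonpos_of_nonpos_of_nonneg hjz (by linarith)
          linarith
        set un := i - i' with hundef
        set vn := j - j' with hvndef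
        have hunz : (un : ℤ) = (i : ℤ) - i' := by omega
        have hvnz : (vn : ℤ) = (j : ℤ) - j' := by omega
        have hunat : un * a = vn * b := by
          have : ((un * a : ℕ) : ℤ) = ((vn * b : ℕ) : ℤ) := by push_cast; rw [hunz, hvnz]; exact E
          exact_mod_cast this
        have hbdvd : b ∣ un * a := ⟨vn, by rw [hunat, mul_comm]⟩
        have h8 : g * b1 ∣ g * (un * a1) := by
          rw [← hbb, show g * (un * a1) = un * a from by rw [haa]; ring]
          exact hbdvd
        have hb1d : b1 ∣ un * a1 := (mul_dvd_mul_iff_left (by omega : g ≠ 0)).mp h8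
        have hcop : Nat.Coprime b1 a1 :=
          (Nat.coprime_div_gcd_div_gcd (by omega : 0 < g)).symm
        have hb1un : b1 ∣ un := hcop.dvd_of_dvd_mul_right hb1d
        have hunpos : 0 < un := by omega
        have hb1le : b1 ≤ un := Nat.le_of_dvd hunpos hb1un
        have hadvd : a ∣ vn * b := ⟨un, by rw [← hunat, mul_comm]⟩
        have h9 : g * a1 ∣ g * (vn * b1) := by
          rw [← haa, show g * (vn * b1) = vn * b from by rw [hbb]; ring]
          exact hadvd
        have ha1d : a1 ∣ vn * b1 := (mul_dvd_mul_iff_left (by omega : g ≠ 0)).mp h9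
        have ha1vn : a1 ∣ vn := hcop.symm.dvd_of_dvd_mul_right ha1d
        have hvnpos : 0 < vn := by omega
        have ha1le : a1 ≤ vn := Nat.le_of_dvd hvnpos ha1vn
        exact p1 ⟨by omega, by omega⟩

lemma exp_uniq (a b : ℕ) (hg : 2 ≤ Nat.gcd a b) (ha : 0 < a) (hb : 0 < b)
    (c : ℤ) (hc : c ≠ 0) (i j i' j' : ℕ)
    (h1 : c = Xe a i - Xe b j) (h2 : c = Xe a i' - Xe b j')
    (p1 : ¬(b / Nat.gcd a b < i ∧ a / Nat.gcd a b < j))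
    (p2 : ¬(b / Nat.gcd a b < i' ∧ a / Nat.gcd a b < j')) : i = i' ∧ j = j' := by
  have hb2 : 2 ≤ b := le_trans hg (Nat.le_of_dvd hb (Nat.gcd_dvd_right a b))
  rcases lt_trichotomy i i' with h | h | h
  · exact absurd (exp_lt_absurd a b hg ha hb c hc i' j' i j h2 h1 p2 h) (by simp)
  · subst h
    refine ⟨rfl, Xe_inj b hb2 ?_⟩
    have : Xe a i - Xe b j = Xe a i - Xe b j' := by rw [← h1, ← h2]
    linarith
  · exact absurd (exp_lt_absurd a b hg ha hb c hc i j i' j' h1 h2 p1 h) (by simp)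

lemma rep_exponent (a b : ℕ) (ha : 0 < a) (hb : 0 < b) (c : ℤ) (i j : ℕ)
    (hrep : (2 : ℚ) ^ c = (Nat.totient ((2 ^ i) ^ a) : ℚ) / (Nat.totient ((2 ^ j) ^ b) : ℚ)) :
    c = Xe a i - Xe b j := by
  have key : ∀ (e k : ℕ), 0 < e → ((Nat.totient ((2 ^ k) ^ e) : ℕ) : ℚ) = (2 : ℚ) ^ (Xe e k) := by
    intro e k he
    rcases Nat.eq_zero_or_pos k with hk0 | hk1
    · subst hk0; simp [Xe]
    · have hke : 0 < k * e := by positivity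
      have h1 : (2 ^ k) ^ e = 2 ^ (k * e) := by rw [← pow_mul]
      have h2 : Nat.totient (2 ^ (k * e)) = 2 ^ (k * e - 1) := by
        rw [Nat.totient_prime_pow Nat.prime_two hke]; norm_num
      have h3 : Xe e k = ((k * e - 1 : ℕ) : ℤ) := by
        rw [Xe, if_neg (by omega : ¬ k = 0)]
        push_cast [Nat.cast_sub (by omega : 1 ≤ k * e)]
        ring
      rw [h1, h2, h3, zpow_natCast]
      push_cast
      ring
  rw [key a i ha, key b j hb, ← zpow_sub₀ (two_ne_zero : (2 : ℚ) ≠ 0)] at hrep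
  exact zpow_right_injective₀ (by norm_num : (0 : ℚ) < 2) (by norm_num) hrep

lemma proper_exp (a b i j : ℕ) (ha : 0 < a) (hb : 0 < b) (hg : 2 ≤ Nat.gcd a b)
    (hp : IsProperRep a b (2 ^ i) (2 ^ j)) :
    ¬ (b / Nat.gcd a b < i ∧ a / Nat.gcd a b < j) := by
  rintro ⟨h1, h2⟩
  set g := Nat.gcd a b with hgdef
  set s0 := b / g with hs0
  set t0 := a / g with ht0
  have haa : a = g * t0 := (Nat.mul_div_cancel' (Nat.gcd_dvd_left a b)).symm
  have hbb : b = g * s0 := (Nat.mul_div_cancel' (Nat.gcd_dvd_right a b)).symm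
  have hs0p : 1 ≤ s0 := by
    rcases Nat.eq_zero_or_pos s0 with h | h
    · rw [h, mul_zero] at hbb; omega
    · exact h
  have ht0p : 1 ≤ t0 := by
    rcases Nat.eq_zero_or_pos t0 with h | h
    · rw [h, mul_zero] at haa; omega
    · exact h
  apply hp
  refine ⟨2 ^ s0, 2 ^ t0, 2 ^ (i - s0), 2 ^ (j - t0), ?_, ?_, ?_, ?_, ?_, ?_, ?_, ?_⟩
  · exact Nat.one_lt_two_pow_iff.mpr (by omega)
  · positivity
  · positivity
  · positivity
  · rw [← pow_add]; congr 1; omega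
  · rw [← pow_add]; congr 1; omega
  · rw [← pow_mul, ← pow_mul]
    congr 1
    calc s0 * a = s0 * (g * t0) := by rw [← haa]
      _ = t0 * (g * s0) := by ring
      _ = t0 * b := by rw [← hbb]
  · intro p hp' hpd
    left
    have hp2 : p = 2 := by
      rw [← pow_add] at hpd
      exact (Nat.prime_dvd_prime_iff_eq hp' Nat.prime_two).mp (hp'.dvd_of_dvd_pow hpd)
    subst hp2
    exact Nat.dvd_gcd (dvd_pow_self 2 (by omega)) (dvd_pow_self 2 (by omega))

theorem stmt_14 (a b : ℕ) (ha : 0 < a) (hb : 0 < b) (hab : 1 < Nat.gcd a b)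
    (c : ℤ) (hc : c ≠ 0) (m n m' n' : ℕ)
    (hm : 0 < m) (hn : 0 < n) (hm' : 0 < m') (hn' : 0 < n')
    (hrep : (2 : ℚ) ^ c = (Nat.totient (m ^ a) : ℚ) / (Nat.totient (n ^ b) : ℚ))
    (hproper : IsProperRep a b m n)
    (hrep' : (2 : ℚ) ^ c = (Nat.totient (m' ^ a) : ℚ) / (Nat.totient (n' ^ b) : ℚ))
    (hproper' : IsProperRep a b m' n') :
    (m = m' ∧ n = n') ∧
      ((∃ i : ℕ, m = 2 ^ i) ∧ (∃ j : ℕ, n = 2 ^ j) ∧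
       (∃ i : ℕ, m' = 2 ^ i) ∧ (∃ j : ℕ, n' = 2 ^ j)) := by
  have hg : 2 ≤ Nat.gcd a b := hab
  have ha2 : 2 ≤ a := le_trans hg (Nat.le_of_dvd ha (Nat.gcd_dvd_left a b))
  have hb2 : 2 ≤ b := le_trans hg (Nat.le_of_dvd hb (Nat.gcd_dvd_right a b))
  have heq := rep_nat_eq c _ _ (Nat.totient_pos.mpr (by positivity : 0 < n ^ b)) hrep
  have heq' := rep_nat_eq c _ _ (Nat.totient_pos.mpr (by positivity : 0 < n' ^ b)) hrep'
  obtain ⟨⟨i, hi⟩, ⟨j, hj⟩⟩ := powers_of_two a b m n ha2 hb2 hm hn _ _ heq hproper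
  obtain ⟨⟨i', hi'⟩, ⟨j', hj'⟩⟩ := powers_of_two a b m' n' ha2 hb2 hm' hn' _ _ heq' hproper'
  subst hi hj hi' hj'
  have hcexp : c = Xe a i - Xe b j := rep_exponent a b ha hb c i j hrep
  have hcexp' : c = Xe a i' - Xe b j' := rep_exponent a b ha hb c i' j' hrep'
  have hp1 := proper_exp a b i j ha hb hg hproper
  have hp2 := proper_exp a b i' j' ha hb hg hproper'
  obtain ⟨hii, hjj⟩ := exp_uniq a b hg ha hb c hc i j i' j' hcexp hcexp' hp1 hp2
  subst hii hjj
  exact ⟨⟨rfl, rfl⟩, ⟨i, rfl⟩, ⟨j, rfl⟩, ⟨i, rfl⟩, ⟨j, rfl⟩⟩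
end
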